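/- arXiv:0806.3134 — 11 statements merged into one kernel-verified Lean document; each statement's English description precedes it below -/
import Mathlib

section
/- For a real vector z ∈ ℝ^M, the sum of pairwise absolute differences ∑_{1≤i<j≤M} |z_i − z_j| equals 2·∑_{k=2}^{M} θ_k − (M−1)·∑_{i=1}^M z_i, where θ_k denotes the sum of the M−k+1 largest entries of z. -/
open Finset

/-- Key: for a monotone `w`, any subset sum of size `#(Ici a)` is at most the top sum. -/
lemma top_sum_max {M : ℕ} (w : Fin M → ℝ) (hw : Monotone w) (a : Fin M)
    (S : Finset (Fin M)) (hS : S.card = (Finset.Ici a).card) :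
    ∑ i ∈ S, w i ≤ ∑ i ∈ Finset.Ici a, w i := by
  set T := Finset.Ici a with hT
  have hcd : (S \ T).card = (T \ S).card := Finset.card_sdiff_comm hS
  have h1 : ∑ i ∈ S ∩ T, w i + ∑ i ∈ S \ T, w i = ∑ i ∈ S, w i :=
    Finset.sum_inter_add_sum_sdiff S T w
  have h2 : ∑ i ∈ T ∩ S, w i + ∑ i ∈ T \ S, w i = ∑ i ∈ T, w i :=
    Finset.sum_inter_add_sum_sdiff T S w
  have hdiff : ∑ i ∈ S \ T, w i ≤ ∑ i ∈ T \ S, w i := by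
    rcases (T \ S).eq_empty_or_nonempty with he | hne
    · have : (S \ T) = ∅ := Finset.card_eq_zero.mp (by rw [hcd, he]; simp)
      simp [this, he]
    · obtain ⟨b0, hb0, hb0min⟩ := Finset.exists_min_image (T \ S) w hne
      have hb0T : a ≤ b0 := Finset.mem_Ici.mp (Finset.mem_sdiff.mp hb0).1
      have hub : ∀ i ∈ S \ T, w i ≤ w b0 := by
        intro i hi
        have : ¬ a ≤ i := by
          have := (Finset.mem_sdiff.mp hi).2
          simpa [hT, Finset.mem_Ici] using this
        exact hw (le_of_lt (lt_of_lt_of_le (lt_of_not_ge this) hb0T))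
      calc ∑ i ∈ S \ T, w i ≤ (S \ T).card • w b0 := Finset.sum_le_card_nsmul _ _ _ hub
        _ = (T \ S).card • w b0 := by rw [hcd]
        _ ≤ ∑ i ∈ T \ S, w i := Finset.card_nsmul_le_sum _ _ _ hb0min
  have hint : ∑ i ∈ S ∩ T, w i = ∑ i ∈ T ∩ S, w i := by rw [Finset.inter_comm]
  linarith

lemma double_pairs {M : ℕ} (g : Fin M → ℝ) :
    2 * ∑ p ∈ Finset.univ.filter (fun p : Fin M × Fin M => p.1 < p.2), |g p.1 - g p.2| =
      ∑ p : Fin M × Fin M, |g p.1 - g p.2| := by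
  classical
  have hsplit := Finset.sum_filter_add_sum_filter_not Finset.univ
    (fun p : Fin M × Fin M => p.1 < p.2) (fun p => |g p.1 - g p.2|)
  have hswap : ∑ p ∈ Finset.univ.filter (fun p : Fin M × Fin M => ¬ p.1 < p.2), |g p.1 - g p.2|
      = ∑ p ∈ Finset.univ.filter (fun p : Fin M × Fin M => p.1 ≤ p.2), |g p.1 - g p.2| := by
    refine Finset.sum_nbij' (fun p => p.swap) (fun p => p.swap) ?_ ?_ ?_ ?_ ?_ <;>
      intro p hp <;> simp_all [not_lt, abs_sub_comm, le_iff_lt_or_eq, Prod.ext_iff]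
  have hle : ∑ p ∈ Finset.univ.filter (fun p : Fin M × Fin M => p.1 ≤ p.2), |g p.1 - g p.2|
      = ∑ p ∈ Finset.univ.filter (fun p : Fin M × Fin M => p.1 < p.2), |g p.1 - g p.2| := by
    have hsub : Finset.univ.filter (fun p : Fin M × Fin M => p.1 < p.2) ⊆
        Finset.univ.filter (fun p : Fin M × Fin M => p.1 ≤ p.2) := by
      intro p hp
      simp only [Finset.mem_filter] at *
      exact ⟨hp.1, le_of_lt hp.2⟩
    refine (Finset.sum_subset hsub ?_).symm
    intro p hp hnp
    have h1 : p.1 ≤ p.2 := (Finset.mem_filter.mp hp).2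
    have h2 : ¬ p.1 < p.2 := by
      intro h; exact hnp (Finset.mem_filter.mpr ⟨Finset.mem_univ _, h⟩)
    have : p.1 = p.2 := le_antisymm h1 (not_lt.mp h2)
    rw [this]; simp
  rw [← hsplit, hswap, hle]; ring

/-- For `z ∈ ℝ^M` (`M ≥ 2`), the sum of pairwise absolute differences equals
`2 ∑_{k=2}^M θ_k - (M-1) ∑_i z_i`, where `θ_k` is the sum of the `M-k+1` largest entries
of `z`, characterized as the maximum subset sum over subsets of cardinality `M-k+1`. -/
theorem stmt_1 (M : ℕ) (hM : 2 ≤ M) (z : Fin M → ℝ) (θ : ℕ → ℝ)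
    (hθ : ∀ k ∈ Finset.Icc 2 M,
      IsGreatest {v : ℝ | ∃ S : Finset (Fin M), S.card = M - k + 1 ∧ v = ∑ i ∈ S, z i} (θ k)) :
    ∑ p ∈ Finset.univ.filter (fun p : Fin M × Fin M => p.1 < p.2), |z p.1 - z p.2| =
      2 * ∑ k ∈ Finset.Icc 2 M, θ k - ((M : ℝ) - 1) * ∑ i : Fin M, z i := by
  classical
  set σ := Tuple.sort z with hσ
  set w : Fin M → ℝ := z ∘ σ with hwdef
  have hw : Monotone w := Tuple.monotone_sort z
  -- θ values in terms of w
  have hθval : ∀ k ∈ Finset.Icc 2 M,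
      θ k = ∑ j ∈ Finset.univ.filter (fun j : Fin M => k - 1 ≤ j.val), w j := by
    intro k hk
    obtain ⟨hk2, hkM⟩ := Finset.mem_Icc.mp hk
    have hklt : k - 1 < M := by omega
    set a : Fin M := ⟨k - 1, hklt⟩ with ha
    have hfe : Finset.univ.filter (fun j : Fin M => k - 1 ≤ j.val) = Finset.Ici a := by
      ext j; simp [Fin.le_def, ha]
    have hcard : (Finset.Ici a).card = M - k + 1 := by
      rw [Fin.card_Ici]; simp only [ha]; omega
    obtain ⟨⟨S, hScard, hSval⟩, hub⟩ := hθ k hk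
    have h1 : θ k ≤ ∑ j ∈ Finset.Ici a, w j := by
      rw [hSval]
      have hmap : ∑ i ∈ S, z i = ∑ j ∈ S.map σ.symm.toEmbedding, w j := by
        rw [Finset.sum_map]
        refine Finset.sum_congr rfl fun i _ => ?_
        simp [hwdef]
      rw [hmap]
      exact top_sum_max w hw a _ (by rw [Finset.card_map, hScard, hcard])
    have h2 : ∑ j ∈ Finset.Ici a, w j ≤ θ k := by
      apply hub
      refine ⟨(Finset.Ici a).map σ.toEmbedding, by rw [Finset.card_map, hcard], ?_⟩
      rw [Finset.sum_map]
      rfl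
    rw [hfe]; linarith
  -- sum of thetas
  have hsum : ∑ k ∈ Finset.Icc 2 M, θ k = ∑ j : Fin M, (j.val : ℝ) * w j := by
    rw [Finset.sum_congr rfl hθval]
    simp only [Finset.sum_filter]
    rw [Finset.sum_comm]
    refine Finset.sum_congr rfl fun j _ => ?_
    rw [← Finset.sum_filter]
    have hfe : (Finset.Icc 2 M).filter (fun k => k - 1 ≤ j.val) = Finset.Icc 2 (j.val + 1) := by
      ext k
      simp only [Finset.mem_filter, Finset.mem_Icc]
      have := j.isLt
      omega
    rw [hfe, Finset.sum_const, Nat.card_Icc]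
    have hc : j.val + 1 + 1 - 2 = j.val := by omega
    rw [hc, nsmul_eq_mul]
  -- pairwise sum over z equals that over w
  have hfull : ∑ p : Fin M × Fin M, |z p.1 - z p.2| = ∑ p : Fin M × Fin M, |w p.1 - w p.2| := by
    rw [← Equiv.sum_comp (σ.prodCongr σ) (fun p : Fin M × Fin M => |z p.1 - z p.2|)]
    rfl
  have hLz : ∑ p ∈ Finset.univ.filter (fun p : Fin M × Fin M => p.1 < p.2), |z p.1 - z p.2|
      = ∑ p ∈ Finset.univ.filter (fun p : Fin M × Fin M => p.1 < p.2), |w p.1 - w p.2| := by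
    have d1 := double_pairs z
    have d2 := double_pairs w
    linarith
  -- compute pairwise sum for w
  have hLw : ∑ p ∈ Finset.univ.filter (fun p : Fin M × Fin M => p.1 < p.2), |w p.1 - w p.2|
      = ∑ j : Fin M, (j.val : ℝ) * w j - ∑ i : Fin M, ((M - 1 - i.val : ℕ) : ℝ) * w i := by
    have habs : ∀ p ∈ Finset.univ.filter (fun p : Fin M × Fin M => p.1 < p.2),
        |w p.1 - w p.2| = w p.2 - w p.1 := by
      intro p hp
      have hlt : p.1 < p.2 := (Finset.mem_filter.mp hp).2
      have : w p.1 ≤ w p.2 := hw (le_of_lt hlt)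
      rw [abs_sub_comm, abs_of_nonneg (by linarith)]
    rw [Finset.sum_congr rfl habs, Finset.sum_sub_distrib]
    congr 1
    · rw [Finset.sum_filter, Fintype.sum_prod_type, Finset.sum_comm]
      refine Finset.sum_congr rfl fun j _ => ?_
      rw [← Finset.sum_filter]
      have hfe : Finset.univ.filter (fun i : Fin M => i < j) = Finset.Iio j := by
        ext i; simp
      rw [hfe]
      simp [Finset.sum_const, Fin.card_Iio, nsmul_eq_mul]
    · rw [Finset.sum_filter, Fintype.sum_prod_type]
      refine Finset.sum_congr rfl fun i _ => ?_
      rw [← Finset.sum_filter]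
      have hfe : Finset.univ.filter (fun j : Fin M => i < j) = Finset.Ioi i := by
        ext j; simp
      rw [hfe]
      simp [Finset.sum_const, Fin.card_Ioi, nsmul_eq_mul]
  have hzw : ∑ i : Fin M, z i = ∑ i : Fin M, w i := (Equiv.sum_comp σ z).symm
  rw [hLz, hLw, hsum, hzw, Finset.mul_sum, Finset.mul_sum, ← Finset.sum_sub_distrib,
    ← Finset.sum_sub_distrib]
  refine Finset.sum_congr rfl fun j _ => ?_
  have hj : j.val < M := j.isLt
  have hc : ((M - 1 - j.val : ℕ) : ℝ) = (M : ℝ) - 1 - (j.val : ℝ) := by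
    have h1 : 1 + j.val ≤ M := by omega
    rw [Nat.sub_sub, Nat.cast_sub h1]
    push_cast
    ring
  rw [hc]; ring
end

section
/- For a real vector z ∈ ℝ^M and any integer q with 1 ≤ q ≤ M, the sum of the q largest entries of z equals the minimum over t ∈ ℝ of q·t + ∑_{i=1}^M max(z_i − t, 0), and the minimum is attained at t equal to the q-th largest entry of z. -/
/-- For `z ∈ ℝ^M` and `1 ≤ q ≤ M`, the sum of the `q` largest entries of `z` equals the
minimum over `t ∈ ℝ` of `q·t + ∑_i max(z_i - t, 0)`, and the minimum is attained at `t`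
equal to the `q`-th largest entry of `z`. Here `w` is a non-increasing rearrangement of `z`,
so the `q` largest entries are `w_0, …, w_{q-1}` and the `q`-th largest is `w_{q-1}`. -/
theorem stmt_2 (M : ℕ) (hM : 1 ≤ M) (z w : Fin M → ℝ) (σ : Equiv.Perm (Fin M))
    (hw : w = z ∘ σ) (hanti : Antitone w) (q : ℕ) (hq1 : 1 ≤ q) (hqM : q ≤ M) :
    (∀ t : ℝ,
      ∑ i ∈ Finset.univ.filter (fun i : Fin M => (i : ℕ) < q), w i ≤
        q * t + ∑ i : Fin M, max (z i - t) 0) ∧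
    ∑ i ∈ Finset.univ.filter (fun i : Fin M => (i : ℕ) < q), w i =
      q * w ⟨q - 1, by omega⟩ + ∑ i : Fin M, max (z i - w ⟨q - 1, by omega⟩) 0 := by
  have hperm : ∀ t : ℝ, ∑ i : Fin M, max (z i - t) 0 = ∑ i : Fin M, max (w i - t) 0 := by
    intro t
    rw [hw]
    exact (Equiv.sum_comp σ (fun i => max (z i - t) 0)).symm
  set S := Finset.univ.filter (fun i : Fin M => (i : ℕ) < q) with hS
  have hcard : (S.card : ℝ) = q := by
    have : S.card = q := by
      rw [hS]
      rw [show (Finset.univ.filter (fun i : Fin M => (i : ℕ) < q)).card = ((Finset.range M).filter (· < q)).card from by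
        rw [Finset.card_filter, Finset.card_filter, Fin.sum_univ_eq_sum_range (fun i => if i < q then 1 else 0) M]]
      rw [show (Finset.range M).filter (· < q) = Finset.range q from by
        ext x; simp; omega]
      exact Finset.card_range q
    exact_mod_cast this
  constructor
  · intro t
    rw [hperm]
    have h1 : ∑ i ∈ S, w i ≤ q * t + ∑ i ∈ S, max (w i - t) 0 := by
      have : ∑ i ∈ S, w i ≤ ∑ i ∈ S, (t + max (w i - t) 0) := by
        apply Finset.sum_le_sum
        intro i _
        have := le_max_left (w i - t) 0
        linarith
      rw [Finset.sum_add_distrib, Finset.sum_const, nsmul_eq_mul, hcard] at this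
      linarith
    have h2 : ∑ i ∈ S, max (w i - t) 0 ≤ ∑ i : Fin M, max (w i - t) 0 := by
      apply Finset.sum_le_sum_of_subset_of_nonneg (Finset.filter_subset _ _)
      intro i _ _
      exact le_max_right _ _
    linarith
  · set t := w ⟨q - 1, by omega⟩ with ht
    rw [hperm]
    have hsum : ∑ i : Fin M, max (w i - t) 0 = ∑ i ∈ S, (w i - t) := by
      rw [← Finset.sum_filter_add_sum_filter_not Finset.univ (fun i : Fin M => (i : ℕ) < q) (fun i => max (w i - t) 0)]
      have hA : ∀ i ∈ S, max (w i - t) 0 = w i - t := by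
        intro i hi
        rw [hS, Finset.mem_filter] at hi
        have : t ≤ w i := by
          apply hanti
          have : (i : ℕ) ≤ q - 1 := by omega
          exact this
        simp [max_eq_left, this]
      have hB : ∀ i ∈ Finset.univ.filter (fun i : Fin M => ¬ (i : ℕ) < q), max (w i - t) 0 = 0 := by
        intro i hi
        rw [Finset.mem_filter] at hi
        have : w i ≤ t := by
          apply hanti
          show (⟨q - 1, by omega⟩ : Fin M) ≤ i
          have := hi.2
          simp [Fin.le_def]
          omega
        simp [max_eq_right, this]
      rw [Finset.sum_congr rfl hA, Finset.sum_congr rfl hB, Finset.sum_const_zero, add_zero]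
    rw [hsum, Finset.sum_sub_distrib, Finset.sum_const, nsmul_eq_mul, hcard]
    ring
end

section
/- For a real vector z ∈ ℝ^M, the sum of pairwise absolute differences ∑_{1≤i<j≤M} |z_i − z_j| equals ∑_{q=1}^{M−1} min_{t∈ℝ} ( 2q·t + 2·∑_{i=1}^M max(z_i − t, 0) ) − (M−1)·∑_{i=1}^M z_i. -/
lemma sInf_lem (M q : ℕ) (hq1 : 1 ≤ q) (hqM : q ≤ M - 1) (hM : 2 ≤ M)
    (z : Fin M → ℝ) (hz : Monotone z) :
    sInf {v : ℝ | ∃ t : ℝ, v = 2 * q * t + 2 * ∑ i : Fin M, max (z i - t) 0}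
      = 2 * ∑ i ∈ Finset.univ.filter (fun i : Fin M => M - q ≤ i.val), z i := by
  set k := M - q with hk
  have hkM : k < M := by omega
  set F := Finset.univ.filter (fun i : Fin M => k ≤ i.val) with hF
  have hcard : F.card = q := by
    have h : F = Finset.Ici (⟨k, hkM⟩ : Fin M) := by ext i; simp [hF, Fin.le_def]
    rw [h, Fin.card_Ici]; simp; omega
  set t₀ := z ⟨k, hkM⟩ with ht₀
  have hmem : (2 * ∑ i ∈ F, z i) ∈
      {v : ℝ | ∃ t : ℝ, v = 2 * q * t + 2 * ∑ i : Fin M, max (z i - t) 0} := by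
    refine ⟨t₀, ?_⟩
    have hsplit : ∑ i : Fin M, max (z i - t₀) 0 = ∑ i ∈ F, (z i - t₀) := by
      rw [← Finset.sum_filter_add_sum_filter_not Finset.univ (fun i : Fin M => k ≤ i.val)]
      have hA : ∑ i ∈ F, max (z i - t₀) 0 = ∑ i ∈ F, (z i - t₀) := by
        apply Finset.sum_congr rfl
        intro i hi
        simp only [hF, Finset.mem_filter] at hi
        have : t₀ ≤ z i := hz (show (⟨k, hkM⟩ : Fin M) ≤ i by simp [Fin.le_def]; exact hi.2)
        exact max_eq_left (by linarith)
      have hB : ∑ i ∈ Finset.univ.filter (fun i : Fin M => ¬ k ≤ i.val), max (z i - t₀) 0 = 0 := by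
        apply Finset.sum_eq_zero
        intro i hi
        simp only [Finset.mem_filter] at hi
        have : z i ≤ t₀ := hz (show i ≤ (⟨k, hkM⟩ : Fin M) by simp [Fin.le_def]; omega)
        exact max_eq_right (by linarith)
      rw [hF] at hA ⊢
      rw [hA, hB, add_zero]
    rw [hsplit, Finset.sum_sub_distrib, Finset.sum_const, hcard, nsmul_eq_mul]
    ring
  have hlb : ∀ v ∈ {v : ℝ | ∃ t : ℝ, v = 2 * q * t + 2 * ∑ i : Fin M, max (z i - t) 0},
      2 * ∑ i ∈ F, z i ≤ v := by
    rintro v ⟨t, rfl⟩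
    have h1 : ∑ i ∈ F, max (z i - t) 0 ≤ ∑ i : Fin M, max (z i - t) 0 := by
      apply Finset.sum_le_sum_of_subset_of_nonneg (Finset.subset_univ _)
      intro i _ _; exact le_max_right _ _
    have h3 : ∑ i ∈ F, z i ≤ ∑ i ∈ F, (t + max (z i - t) 0) := by
      apply Finset.sum_le_sum
      intro i _
      have : z i - t ≤ max (z i - t) 0 := le_max_left _ _
      linarith
    rw [Finset.sum_add_distrib, Finset.sum_const, hcard, nsmul_eq_mul] at h3
    linarith
  exact IsGLB.csInf_eq ⟨hlb, fun b hb => hb hmem⟩ ⟨_, hmem⟩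


theorem key_lem (M : ℕ) (hM : 2 ≤ M) (z : Fin M → ℝ) (hz : Monotone z)
    (hs : ∀ q ∈ Finset.Icc 1 (M-1),
      sInf {v : ℝ | ∃ t : ℝ, v = 2 * q * t + 2 * ∑ i : Fin M, max (z i - t) 0}
        = 2 * ∑ i ∈ Finset.univ.filter (fun i : Fin M => M - q ≤ i.val), z i) :
    ∑ p ∈ Finset.univ.filter (fun p : Fin M × Fin M => p.1 < p.2), |z p.1 - z p.2| =
      (∑ q ∈ Finset.Icc 1 (M - 1),
        sInf {v : ℝ | ∃ t : ℝ, v = 2 * q * t + 2 * ∑ i : Fin M, max (z i - t) 0}) -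
      ((M : ℝ) - 1) * ∑ i : Fin M, z i := by
  rw [Finset.sum_congr rfl hs]
  -- RHS sum computation
  have hR : ∑ q ∈ Finset.Icc 1 (M-1),
      2 * ∑ i ∈ Finset.univ.filter (fun i : Fin M => M - q ≤ i.val), z i
      = ∑ i : Fin M, (i.val : ℝ) * (2 * z i) := by
    have step : ∀ q ∈ Finset.Icc 1 (M-1),
        2 * ∑ i ∈ Finset.univ.filter (fun i : Fin M => M - q ≤ i.val), z i
          = ∑ i : Fin M, if M - q ≤ i.val then 2 * z i else 0 := by
      intro q _
      rw [Finset.mul_sum, ← Finset.sum_filter]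
    rw [Finset.sum_congr rfl step, Finset.sum_comm]
    apply Finset.sum_congr rfl
    intro i _
    rw [← Finset.sum_filter, Finset.sum_const]
    have hset : (Finset.Icc 1 (M-1)).filter (fun q => M - q ≤ i.val)
        = Finset.Icc (M - i.val) (M-1) := by
      ext q; simp only [Finset.mem_filter, Finset.mem_Icc]
      constructor
      · rintro ⟨⟨h1, h2⟩, h3⟩; omega
      · intro ⟨h1, h2⟩
        have := i.isLt; omega
    rw [hset, Nat.card_Icc]
    have := i.isLt
    have hc : (M - 1 + 1) - (M - i.val) = i.val := by omega
    rw [hc, nsmul_eq_mul]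
  rw [hR]
  -- LHS computation
  rw [Finset.sum_filter, Fintype.sum_prod_type]
  have hL : ∀ i : Fin M, ∑ j : Fin M, (if i < j then |z i - z j| else 0)
      = (∑ j : Fin M, if i < j then z j else 0) - (∑ j : Fin M, if i < j then z i else 0) := by
    intro i
    rw [← Finset.sum_sub_distrib]
    apply Finset.sum_congr rfl
    intro j _
    by_cases h : i < j
    · simp only [h, if_true]
      rw [abs_sub_comm, abs_of_nonneg (by have := hz h.le; linarith)]
    · simp [h]
  rw [Finset.sum_congr rfl (fun i _ => hL i), Finset.sum_sub_distrib]
  have hT1 : ∑ i : Fin M, ∑ j : Fin M, (if i < j then z j else 0)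
      = ∑ j : Fin M, (j.val : ℝ) * z j := by
    rw [Finset.sum_comm]
    apply Finset.sum_congr rfl
    intro j _
    rw [← Finset.sum_filter, Finset.sum_const]
    have hset : Finset.univ.filter (fun i : Fin M => i < j) = Finset.Iio j := by ext i; simp
    rw [hset, Fin.card_Iio, nsmul_eq_mul]
  have hT2 : ∑ i : Fin M, ∑ j : Fin M, (if i < j then z i else 0)
      = ∑ i : Fin M, ((M - 1 - i.val : ℕ) : ℝ) * z i := by
    apply Finset.sum_congr rfl
    intro i _
    rw [← Finset.sum_filter, Finset.sum_const]
    have hset : Finset.univ.filter (fun j : Fin M => i < j) = Finset.Ioi i := by ext j; simp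
    rw [hset, Fin.card_Ioi, nsmul_eq_mul]
  rw [hT1, hT2, Finset.mul_sum, ← Finset.sum_sub_distrib, ← Finset.sum_sub_distrib]
  apply Finset.sum_congr rfl
  intro i _
  have hi : i.val ≤ M - 1 := by have := i.isLt; omega
  have hcast : ((M - 1 - i.val : ℕ) : ℝ) = (M : ℝ) - 1 - (i.val : ℝ) := by
    have h1 : ((M - 1 - i.val : ℕ) : ℝ) = ((M-1:ℕ):ℝ) - (i.val:ℝ) := by
      rw [Nat.cast_sub hi]
    rw [h1, Nat.cast_sub (by omega)]; norm_num
  rw [hcast]; ring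


theorem half_sum (M : ℕ) (f : Fin M → ℝ) :
    ∑ p ∈ Finset.univ.filter (fun p : Fin M × Fin M => p.1 < p.2), |f p.1 - f p.2| =
      (∑ i : Fin M, ∑ j : Fin M, |f i - f j|) / 2 := by
  have hfull : ∑ i : Fin M, ∑ j : Fin M, |f i - f j|
      = ∑ p : Fin M × Fin M, |f p.1 - f p.2| := by
    rw [Fintype.sum_prod_type]
  rw [hfull, ← Finset.sum_filter_add_sum_filter_not Finset.univ
    (fun p : Fin M × Fin M => p.1 < p.2) (fun p => |f p.1 - f p.2|)]
  have hswap : ∑ p ∈ Finset.univ.filter (fun p : Fin M × Fin M => ¬ p.1 < p.2),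
      |f p.1 - f p.2|
      = ∑ p ∈ Finset.univ.filter (fun p : Fin M × Fin M => p.1 ≤ p.2), |f p.1 - f p.2| := by
    apply Finset.sum_nbij' (fun p => Prod.swap p) (fun p => Prod.swap p)
    · intro p hp; simp only [Finset.mem_filter, Finset.mem_univ, true_and] at hp ⊢
      simpa [not_lt] using hp
    · intro p hp; simp only [Finset.mem_filter, Finset.mem_univ, true_and] at hp ⊢
      simpa [not_lt] using hp
    · intro p _; simp
    · intro p _; simp
    · intro p _; simp [abs_sub_comm]
  have hle : ∑ p ∈ Finset.univ.filter (fun p : Fin M × Fin M => p.1 ≤ p.2), |f p.1 - f p.2|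
      = ∑ p ∈ Finset.univ.filter (fun p : Fin M × Fin M => p.1 < p.2), |f p.1 - f p.2| := by
    symm
    apply Finset.sum_subset
    · intro p hp; simp only [Finset.mem_filter, Finset.mem_univ, true_and] at hp ⊢; exact le_of_lt hp
    · intro p hp hnp
      simp only [Finset.mem_filter, Finset.mem_univ, true_and] at hp hnp
      have : p.1 = p.2 := le_antisymm hp (not_lt.mp hnp)
      rw [this]; simp
  rw [hswap, hle]; ring


/-- For `z ∈ ℝ^M` (`M ≥ 2`), the sum of pairwise absolute differences equals
`∑_{q=1}^{M-1} min_{t∈ℝ} (2q·t + 2∑_i max(z_i - t, 0)) - (M-1) ∑_i z_i`. -/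
theorem stmt_3 (M : ℕ) (hM : 2 ≤ M) (z : Fin M → ℝ) :
    ∑ p ∈ Finset.univ.filter (fun p : Fin M × Fin M => p.1 < p.2), |z p.1 - z p.2| =
      (∑ q ∈ Finset.Icc 1 (M - 1),
        sInf {v : ℝ | ∃ t : ℝ, v = 2 * q * t + 2 * ∑ i : Fin M, max (z i - t) 0}) -
      ((M : ℝ) - 1) * ∑ i : Fin M, z i := by
  set σ := Tuple.sort z with hσ
  set w := z ∘ σ with hw
  have hmono : Monotone w := Tuple.monotone_sort z
  have hkey := key_lem M hM w hmono (fun q hq => by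
    simp only [Finset.mem_Icc] at hq
    exact sInf_lem M q hq.1 hq.2 hM w hmono)
  -- transfer LHS
  have hLHS : ∑ p ∈ Finset.univ.filter (fun p : Fin M × Fin M => p.1 < p.2), |z p.1 - z p.2|
      = ∑ p ∈ Finset.univ.filter (fun p : Fin M × Fin M => p.1 < p.2), |w p.1 - w p.2| := by
    rw [half_sum, half_sum]
    congr 1
    calc ∑ i : Fin M, ∑ j : Fin M, |z i - z j|
        = ∑ i : Fin M, ∑ j : Fin M, |z (σ i) - z j| :=
          (Equiv.sum_comp σ (fun i => ∑ j : Fin M, |z i - z j|)).symm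
      _ = ∑ i : Fin M, ∑ j : Fin M, |w i - w j| := by
          apply Finset.sum_congr rfl
          intro i _
          exact (Equiv.sum_comp σ (fun j => |z (σ i) - z j|)).symm
  -- transfer RHS
  have hsum : ∀ t : ℝ, ∑ i : Fin M, max (w i - t) 0 = ∑ i : Fin M, max (z i - t) 0 :=
    fun t => Equiv.sum_comp σ (fun i => max (z i - t) 0)
  have hset : ∀ q : ℕ, {v : ℝ | ∃ t : ℝ, v = 2 * q * t + 2 * ∑ i : Fin M, max (w i - t) 0}
      = {v : ℝ | ∃ t : ℝ, v = 2 * q * t + 2 * ∑ i : Fin M, max (z i - t) 0} := by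
    intro q; ext v
    constructor
    · rintro ⟨t, rfl⟩; exact ⟨t, by rw [hsum t]⟩
    · rintro ⟨t, rfl⟩; exact ⟨t, by rw [hsum t]⟩
  have hSz : ∑ i : Fin M, w i = ∑ i : Fin M, z i := Equiv.sum_comp σ z
  rw [hLHS, hkey, hSz]
  congr 1
  apply Finset.sum_congr rfl
  intro q _
  rw [hset q]
end

section
/- Let O : A × A → {1,…,M} be such that for each customer i, the map j ↦ O_{ij} is a bijection from A = {1,…,M} to {1,…,M} (a preference ranking). Let y ∈ {0,1}^M with ∑_{j=1}^M y_j = p, where 1 ≤ p ≤ M, and let z ∈ ℝ^M. Suppose z satisfies, for all i ∈ A and k = 1,…,M−p+1: z_i + ∑_{ℓ : O_{iℓ} ≤ k−1} (k − O_{iℓ}) y_ℓ ≥ k, and for all i,k ∈ A with O_{ik} ≤ M−p+1: z_i + (M−p+1−O_{ik}) y_k ≤ M−p+1. Then z_i = min { O_{ij} : y_j = 1 } for every i ∈ A. -/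
/-- Closest-assignment constraints: if the preference ranks `O i : A → {1,…,M}` are
bijections, `y` is a 0-1 vector with `p` ones, and `z` satisfies the two families of
closest-assignment constraints, then `z_i = min {O_{ij} : y_j = 1}` for every `i`. -/
theorem stmt_6 (M p : ℕ) (hp1 : 1 ≤ p) (hpM : p ≤ M)
    (O : Fin M → Fin M → ℕ)
    (hO : ∀ i, Set.BijOn (O i) Set.univ (Set.Icc 1 M))
    (y : Fin M → ℕ) (hy01 : ∀ j, y j = 0 ∨ y j = 1)
    (hyp : ∑ j : Fin M, y j = p)
    (z : Fin M → ℝ)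
    (hge : ∀ i : Fin M, ∀ k ∈ Finset.Icc 1 (M - p + 1),
      (k : ℝ) ≤ z i + ∑ ℓ ∈ Finset.univ.filter (fun ℓ : Fin M => O i ℓ ≤ k - 1),
        ((k : ℝ) - O i ℓ) * y ℓ)
    (hle : ∀ i k : Fin M, O i k ≤ M - p + 1 →
      z i + ((M : ℝ) - p + 1 - O i k) * y k ≤ (M : ℝ) - p + 1) :
    ∀ i : Fin M, z i = ((sInf {r : ℕ | ∃ j, y j = 1 ∧ O i j = r} : ℕ) : ℝ) := by
  intro i
  classical
  set T : Finset (Fin M) := Finset.univ.filter (fun j => y j = 1) with hT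
  have hinj : Set.InjOn (O i) Set.univ := (hO i).injOn
  have hTcard : T.card = p := by
    have h1 : ∑ j ∈ T, y j = ∑ j : Fin M, y j := by
      apply Finset.sum_subset (Finset.subset_univ T)
      intro x _ hx
      rcases hy01 x with h | h
      · exact h
      · exact absurd (Finset.mem_filter.2 ⟨Finset.mem_univ x, h⟩) hx
    have h2 : ∑ j ∈ T, y j = T.card := by
      rw [Finset.card_eq_sum_ones]
      apply Finset.sum_congr rfl
      intro x hx
      exact (Finset.mem_filter.1 hx).2
    rw [← h2, h1, hyp]
  set S : Finset ℕ := T.image (O i) with hS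
  have hScard : S.card = p := by
    rw [hS, Finset.card_image_of_injOn, hTcard]
    intro a _ b _ hab
    exact hinj (Set.mem_univ a) (Set.mem_univ b) hab
  have hSne : S.Nonempty := Finset.card_pos.1 (by omega)
  set m : ℕ := S.min' hSne with hm
  have hbound : ∀ r ∈ S, 1 ≤ r ∧ r ≤ M := by
    intro r hr
    rcases Finset.mem_image.1 hr with ⟨j, _, rfl⟩
    have := (hO i).mapsTo (Set.mem_univ j)
    exact ⟨this.1, this.2⟩
  have hm1 : 1 ≤ m := (hbound m (S.min'_mem hSne)).1
  have hmM : m ≤ M := (hbound m (S.min'_mem hSne)).2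
  have hsub : S ⊆ Finset.Icc m M := by
    intro r hr
    exact Finset.mem_Icc.2 ⟨S.min'_le r hr, (hbound r hr).2⟩
  have hcard : p ≤ M + 1 - m := by
    have := Finset.card_le_card hsub
    rwa [hScard, Nat.card_Icc] at this
  have hmle : m ≤ M - p + 1 := by omega
  obtain ⟨jstar, hjT, hjO⟩ := Finset.mem_image.1 (S.min'_mem hSne)
  have hyj : y jstar = 1 := (Finset.mem_filter.1 hjT).2
  -- lower bound: z i ≥ m
  have hlow : (m : ℝ) ≤ z i := by
    have hk : m ∈ Finset.Icc 1 (M - p + 1) := Finset.mem_Icc.2 ⟨hm1, hmle⟩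
    have h := hge i m hk
    have hzero : ∑ ℓ ∈ Finset.univ.filter (fun ℓ : Fin M => O i ℓ ≤ m - 1),
        ((m : ℝ) - O i ℓ) * y ℓ = 0 := by
      apply Finset.sum_eq_zero
      intro ℓ hℓ
      have hℓm : O i ℓ ≤ m - 1 := (Finset.mem_filter.1 hℓ).2
      have hy0 : y ℓ = 0 := by
        rcases hy01 ℓ with h0 | h1
        · exact h0
        · have hmem : O i ℓ ∈ S := Finset.mem_image.2
            ⟨ℓ, Finset.mem_filter.2 ⟨Finset.mem_univ ℓ, h1⟩, rfl⟩
          have := S.min'_le _ hmem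
          omega
      rw [hy0]
      simp
    rw [hzero, add_zero] at h
    exact h
  -- upper bound: z i ≤ m
  have hhigh : z i ≤ (m : ℝ) := by
    have h := hle i jstar (by rw [hjO]; exact hmle)
    rw [hjO, hyj] at h
    have hcast : (m : ℝ) ≤ (M : ℝ) - p + 1 := by
      have : (m : ℝ) ≤ ((M - p + 1 : ℕ) : ℝ) := Nat.cast_le.2 hmle
      rwa [Nat.cast_add, Nat.cast_sub hpM, Nat.cast_one] at this
    push_cast at h
    linarith
  have hset : {r : ℕ | ∃ j, y j = 1 ∧ O i j = r} = ↑S := by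
    ext r
    simp only [Set.mem_setOf_eq, hS, Finset.coe_image, Set.mem_image,
      Finset.mem_coe, hT, Finset.mem_filter, Finset.mem_univ, true_and]
  rw [hset, hSne.csInf_eq_min']
  exact le_antisymm hhigh hlow
end

section
/- Let O_{i·} : A → {1,…,M} be a bijection for each i ∈ A = {1,…,M}, let y ∈ {0,1}^M with ∑_j y_j = p, and define z_i = min{O_{ij} : y_j = 1} and z_{ik} = 1 if z_i ≥ k and 0 otherwise, for k = 2,…,M−p+1. Then for every i ∈ A and k = 2,…,M−p: p · z_{ik} ≤ ∑_{j : O_{ij} ≥ k} y_j. -/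
/-- Validity of inequality (p102) for formulation (F2): with `z_i` the rank of the best
open facility for customer `i` and `ζ i k` the indicator of `z_i ≥ k`, we have
`p · ζ_{ik} ≤ ∑_{j : O_{ij} ≥ k} y_j` for all `i` and `k = 2,…,M-p`. -/
theorem stmt_7 (M p : ℕ) (hp1 : 1 ≤ p) (hpM : p ≤ M)
    (O : Fin M → Fin M → ℕ)
    (hO : ∀ i, Set.BijOn (O i) Set.univ (Set.Icc 1 M))
    (y : Fin M → ℕ) (hy01 : ∀ j, y j = 0 ∨ y j = 1)
    (hyp : ∑ j : Fin M, y j = p)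
    (z : Fin M → ℕ) (hz : ∀ i, z i = sInf {r : ℕ | ∃ j, y j = 1 ∧ O i j = r})
    (ζ : Fin M → ℕ → ℕ) (hζ : ∀ i k, ζ i k = if k ≤ z i then 1 else 0) :
    ∀ i : Fin M, ∀ k ∈ Finset.Icc 2 (M - p),
      p * ζ i k ≤ ∑ j ∈ Finset.univ.filter (fun j : Fin M => k ≤ O i j), y j := by
  intro i k hk
  rw [hζ]
  split_ifs with h
  · -- k ≤ z i, so every open facility has rank ≥ k
    have hkey : ∀ j, y j = 1 → k ≤ O i j := by
      intro j hj
      have : z i ≤ O i j := by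
        rw [hz]; exact Nat.sInf_le ⟨j, hj, rfl⟩
      omega
    have : ∑ j ∈ Finset.univ.filter (fun j : Fin M => k ≤ O i j), y j
        = ∑ j : Fin M, y j := by
      apply Finset.sum_subset (Finset.filter_subset _ _)
      intro j _ hj
      rcases hy01 j with h0 | h1
      · exact h0
      · exact absurd (Finset.mem_filter.mpr ⟨Finset.mem_univ j, hkey j h1⟩) hj
    rw [this, hyp, mul_one]
  · simp
end

section
/- Let O_{i·} : A → {1,…,M} be a bijection for each i ∈ A = {1,…,M}, let y ∈ {0,1}^M with ∑_j y_j = p ≥ 1, and define z_i = min{O_{ij} : y_j = 1} and z_{ik} = 1 if z_i ≥ k and 0 otherwise. Then for every i ∈ A and k = 2,…,M−p: (p−1)·(z_{ik} − z_{i,k+1}) ≤ ∑_{j : O_{ij} ≥ k+1} y_j. -/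
/-- Validity of inequality (p103) for formulation (F2):
`(p-1)·(ζ_{ik} - ζ_{i,k+1}) ≤ ∑_{j : O_{ij} ≥ k+1} y_j` for all `i` and `k = 2,…,M-p`. -/
theorem stmt_8 (M p : ℕ) (hp1 : 1 ≤ p) (hpM : p ≤ M)
    (O : Fin M → Fin M → ℕ)
    (hO : ∀ i, Set.BijOn (O i) Set.univ (Set.Icc 1 M))
    (y : Fin M → ℕ) (hy01 : ∀ j, y j = 0 ∨ y j = 1)
    (hyp : ∑ j : Fin M, y j = p)
    (z : Fin M → ℕ) (hz : ∀ i, z i = sInf {r : ℕ | ∃ j, y j = 1 ∧ O i j = r})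
    (ζ : Fin M → ℕ → ℕ) (hζ : ∀ i k, ζ i k = if k ≤ z i then 1 else 0) :
    ∀ i : Fin M, ∀ k ∈ Finset.Icc 2 (M - p),
      ((p : ℤ) - 1) * ((ζ i k : ℤ) - (ζ i (k + 1) : ℤ)) ≤
        ∑ j ∈ Finset.univ.filter (fun j : Fin M => k + 1 ≤ O i j), (y j : ℤ) := by
  intro i k hk
  have hRHS0 : 0 ≤ ∑ j ∈ Finset.univ.filter (fun j : Fin M => k + 1 ≤ O i j), (y j : ℤ) :=
    Finset.sum_nonneg fun j _ => Int.ofNat_nonneg _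
  by_cases hcase : z i = k
  · -- main case: z i = k
    have hSne : {r : ℕ | ∃ j, y j = 1 ∧ O i j = r}.Nonempty := by
      by_contra h
      have hall : ∀ j, y j = 0 := by
        intro j
        rcases hy01 j with h0 | h1
        · exact h0
        · exact absurd ⟨O i j, j, h1, rfl⟩ h
      have : (∑ j : Fin M, y j) = 0 := Finset.sum_eq_zero fun j _ => hall j
      omega
    have hmem := Nat.sInf_mem hSne
    rw [hz i] at hcase
    rw [hcase] at hmem
    obtain ⟨j0, hj0y, hj0O⟩ := hmem
    have hlb : ∀ j, y j = 1 → k ≤ O i j := by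
      intro j hj
      have : O i j ∈ {r : ℕ | ∃ j, y j = 1 ∧ O i j = r} := ⟨j, hj, rfl⟩
      have := Nat.sInf_le this
      omega
    have hinj := (hO i).injOn
    -- sum over complement filter is 1
    have hnot : ∑ j ∈ Finset.univ.filter (fun j : Fin M => ¬ (k + 1 ≤ O i j)), y j = 1 := by
      have hj0mem : j0 ∈ Finset.univ.filter (fun j : Fin M => ¬ (k + 1 ≤ O i j)) := by
        simp [hj0O]
      rw [Finset.sum_eq_single_of_mem j0 hj0mem ?_, hj0y]
      intro b hb hbne
      simp only [Finset.mem_filter, Finset.mem_univ, true_and, not_le] at hb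
      rcases hy01 b with h0 | h1
      · exact h0
      · exfalso
        have hbk : O i b = k := by
          have := hlb b h1; omega
        exact hbne (hinj (Set.mem_univ b) (Set.mem_univ j0) (by rw [hbk, hj0O]))
    have hsplit := Finset.sum_filter_add_sum_filter_not Finset.univ
      (fun j : Fin M => k + 1 ≤ O i j) y
    have hsum : ∑ j ∈ Finset.univ.filter (fun j : Fin M => k + 1 ≤ O i j), y j = p - 1 := by
      omega
    have hzik : z i = k := by rw [hz i, hcase]
    have hζk : ζ i k = 1 := by rw [hζ]; simp [hzik]
    have hζk1 : ζ i (k + 1) = 0 := by rw [hζ]; simp [hzik]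
    rw [hζk, hζk1]
    have hcast : (∑ j ∈ Finset.univ.filter (fun j : Fin M => k + 1 ≤ O i j), (y j : ℤ))
        = ((p : ℤ) - 1) := by
      have hc : (∑ j ∈ Finset.univ.filter (fun j : Fin M => k + 1 ≤ O i j), (y j : ℤ))
          = ((∑ j ∈ Finset.univ.filter (fun j : Fin M => k + 1 ≤ O i j), y j : ℕ) : ℤ) := by
        push_cast; rfl
      rw [hc, hsum, Nat.cast_sub hp1, Nat.cast_one]
    rw [hcast]
    push_cast
    nlinarith
  · -- z i ≠ k: then ζ i k = ζ i (k+1)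
    have heq : ζ i k = ζ i (k + 1) := by
      rw [hζ, hζ]
      rcases le_or_gt k (z i) with h | h
      · have : k + 1 ≤ z i := by omega
        simp [h, this]
      · have h1 : ¬ k ≤ z i := by omega
        have h2 : ¬ k + 1 ≤ z i := by omega
        simp [h1, h2]
    rw [heq]
    simpa using hRHS0
end

section
/- Let O_{i·} : A → {1,…,M} be a bijection for each i ∈ A = {1,…,M}, let y ∈ {0,1}^M with ∑_j y_j = p ≥ 1, and define z_i = min{O_{ij} : y_j = 1} and z_{ik} = 1 if z_i ≥ k and 0 otherwise. Then for every i ∈ A and every k = 2,…,M−p+1: z_{ik} + ∑_{j : O_{ij} < k} y_j ≥ 1. -/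
/-- Validity of inequality (p105) for formulation (F2):
`ζ_{ik} + ∑_{j : O_{ij} < k} y_j ≥ 1` for all `i` and `k = 2,…,M-p+1`. -/
theorem stmt_9 (M p : ℕ) (hp1 : 1 ≤ p) (hpM : p ≤ M)
    (O : Fin M → Fin M → ℕ)
    (hO : ∀ i, Set.BijOn (O i) Set.univ (Set.Icc 1 M))
    (y : Fin M → ℕ) (hy01 : ∀ j, y j = 0 ∨ y j = 1)
    (hyp : ∑ j : Fin M, y j = p)
    (z : Fin M → ℕ) (hz : ∀ i, z i = sInf {r : ℕ | ∃ j, y j = 1 ∧ O i j = r})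
    (ζ : Fin M → ℕ → ℕ) (hζ : ∀ i k, ζ i k = if k ≤ z i then 1 else 0) :
    ∀ i : Fin M, ∀ k ∈ Finset.Icc 2 (M - p + 1),
      1 ≤ ζ i k + ∑ j ∈ Finset.univ.filter (fun j : Fin M => O i j < k), y j := by
  intro i k hk
  rw [hζ]
  by_cases h : k ≤ z i
  · simp [h]
  · push_neg at h
    -- the defining set is nonempty
    have hne : {r : ℕ | ∃ j, y j = 1 ∧ O i j = r}.Nonempty := by
      have : ∃ j, y j = 1 := by
        by_contra hcon
        push_neg at hcon
        have : ∀ j, y j = 0 := fun j => (hy01 j).resolve_right (hcon j)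
        simp [this] at hyp
        omega
      obtain ⟨j, hj⟩ := this
      exact ⟨O i j, j, hj, rfl⟩
    have hmem := Nat.sInf_mem hne
    rw [← hz i] at hmem
    obtain ⟨j0, hj0, hO0⟩ := hmem
    have hj0mem : j0 ∈ Finset.univ.filter (fun j : Fin M => O i j < k) := by
      simp [hO0, h]
    have := Finset.single_le_sum (f := y) (fun j _ => Nat.zero_le _) hj0mem
    omega
end

section
/- Let O_{i·} : A → {1,…,M} be a bijection for each i ∈ A, let y ∈ {0,1}^M with ∑_j y_j = p, define z_i = min{O_{ij} : y_j = 1} and z_{ik} = 1 if z_i ≥ k and 0 else. Then z_{ik} ≥ z_{i,k+1} for all i and k = 2,…,M−p; moreover for all i,j with 2 ≤ O_{ij} ≤ M−p: z_{i,O_{ij}} − z_{i,O_{ij}+1} ≤ y_j, for all i,j with O_{ij} = 1: 1 − z_{i2} ≤ y_j, and for all i,j with O_{ij} ≤ M−p: z_{i,O_{ij}+1} + y_j ≤ 1. -/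
/-- Core linking constraints of formulation (F2): the step variables
`ζ i k = [z_i ≥ k]` are consistent with the open-facility indicators `y`. -/
theorem stmt_10 (M p : ℕ) (hp1 : 1 ≤ p) (hpM : p ≤ M)
    (O : Fin M → Fin M → ℕ)
    (hO : ∀ i, Set.BijOn (O i) Set.univ (Set.Icc 1 M))
    (y : Fin M → ℕ) (hy01 : ∀ j, y j = 0 ∨ y j = 1)
    (hyp : ∑ j : Fin M, y j = p)
    (z : Fin M → ℕ) (hz : ∀ i, z i = sInf {r : ℕ | ∃ j, y j = 1 ∧ O i j = r})
    (ζ : Fin M → ℕ → ℕ) (hζ : ∀ i k, ζ i k = if k ≤ z i then 1 else 0) :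
    (∀ i : Fin M, ∀ k ∈ Finset.Icc 2 (M - p), ζ i (k + 1) ≤ ζ i k) ∧
    (∀ i j : Fin M, 2 ≤ O i j → O i j ≤ M - p →
      (ζ i (O i j) : ℤ) - (ζ i (O i j + 1) : ℤ) ≤ (y j : ℤ)) ∧
    (∀ i j : Fin M, O i j = 1 → (1 : ℤ) - (ζ i 2 : ℤ) ≤ (y j : ℤ)) ∧
    (∀ i j : Fin M, O i j ≤ M - p → ζ i (O i j + 1) + y j ≤ 1) := by
  -- there is some open facility
  have hne : ∃ j, y j = 1 := by
    by_contra h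
    push_neg at h
    have : ∀ j, y j = 0 := fun j => (hy01 j).resolve_right (h j)
    have : (∑ j : Fin M, y j) = 0 := Finset.sum_eq_zero fun j _ => this j
    omega
  -- z i belongs to the rank set
  have hmem : ∀ i, ∃ j, y j = 1 ∧ O i j = z i := by
    intro i
    have hns : {r : ℕ | ∃ j, y j = 1 ∧ O i j = r}.Nonempty := by
      obtain ⟨j, hj⟩ := hne
      exact ⟨O i j, j, hj, rfl⟩
    have := Nat.sInf_mem hns
    rw [hz i]
    exact this
  have hle : ∀ i j, y j = 1 → z i ≤ O i j := by
    intro i j hj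
    rw [hz i]
    exact Nat.sInf_le ⟨j, hj, rfl⟩
  -- if y j = 0 then z i ≠ O i j
  have hneq : ∀ i j, y j = 0 → z i ≠ O i j := by
    intro i j hj h
    obtain ⟨j', hj', hOj'⟩ := hmem i
    have : j' = j := (hO i).injOn trivial trivial (by rw [hOj', h])
    rw [this] at hj'
    omega
  have hz1 : ∀ i, 1 ≤ z i := by
    intro i
    obtain ⟨j', hj', hOj'⟩ := hmem i
    have := ((hO i).mapsTo (Set.mem_univ j')).1
    omega
  refine ⟨?_, ?_, ?_, ?_⟩
  · intro i k _
    rw [hζ, hζ]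
    split <;> split <;> omega
  · intro i j _ _
    rcases hy01 j with hj | hj
    · have h1 := hneq i j hj
      rw [hζ, hζ]
      split <;> split <;> omega
    · rw [hζ, hζ, hj]
      split <;> split <;> simp
  · intro i j h1
    rcases hy01 j with hj | hj
    · have h2 := hneq i j hj
      have h3 := hz1 i
      rw [hζ]
      rw [h1] at h2
      split <;> omega
    · rw [hζ, hj]
      split <;> simp
  · intro i j _
    rcases hy01 j with hj | hj
    · rw [hζ, hj]; split <;> omega
    · have := hle i j hj
      rw [hζ, hj]
      split <;> omega
end

section
/- For any z ∈ ℝ^M and any k with 2 ≤ k ≤ M, the sum of the M−k+1 largest entries of z equals max over subsets S ⊆ {1,…,M} with |S| = M−k+1 of ∑_{i∈S} z_i; consequently, in the optimization problem min { 2∑_{k=2}^M θ_k − (M−1)∑_i z_i : θ_k ≥ ∑_{i∈S} z_i for all S with |S| = M−k+1 } over θ ∈ ℝ^{M−1}, the optimal value equals ∑_{1≤i<j≤M} |z_i − z_j|. -/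
-- helper: strictly monotone map Fin m → Fin M satisfies n ≤ f n
lemma aux_le' {m M : ℕ} (f : Fin m → Fin M) (hf : StrictMono f) :
    ∀ n (h : n < m), n ≤ (f ⟨n, h⟩ : ℕ) := by
  intro n
  induction n with
  | zero => intro h; exact Nat.zero_le _
  | succ n ih =>
    intro h
    have h' : n < m := by omega
    have h1 : f ⟨n, h'⟩ < f ⟨n+1, h⟩ := hf (by simp [Fin.lt_def])
    have h2 := ih h'
    rw [Fin.lt_def] at h1
    omega

-- the filter set is the image of Fin m under castLE
lemma filter_eq_map {M m : ℕ} (hm : m ≤ M) :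
    (Finset.univ.map ⟨Fin.castLE hm, Fin.castLE_injective hm⟩ : Finset (Fin M)) =
      Finset.univ.filter (fun i : Fin M => (i : ℕ) < m) := by
  ext x
  simp only [Finset.mem_map, Finset.mem_univ, true_and, Finset.mem_filter,
    Function.Embedding.coeFn_mk]
  constructor
  · rintro ⟨j, rfl⟩; exact j.isLt
  · intro hx; exact ⟨⟨x, hx⟩, rfl⟩

lemma filter_card {M m : ℕ} (hm : m ≤ M) :
    (Finset.univ.filter (fun i : Fin M => (i : ℕ) < m)).card = m := by
  rw [← filter_eq_map hm, Finset.card_map, Finset.card_univ, Fintype.card_fin]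

-- dominance
lemma dom {M m : ℕ} (w : Fin M → ℝ) (hanti : Antitone w) (S : Finset (Fin M))
    (h : S.card = m) :
    ∑ i ∈ S, w i ≤ ∑ i ∈ Finset.univ.filter (fun i : Fin M => (i : ℕ) < m), w i := by
  have hm : m ≤ M := by
    rw [← h]
    simpa using Finset.card_le_univ S
  have hS : Finset.univ.map ⟨(S.orderEmbOfFin h : Fin m → Fin M),
      (S.orderEmbOfFin h).injective⟩ = S := by
    ext x
    simp only [Finset.mem_map, Finset.mem_univ, true_and, Function.Embedding.coeFn_mk]
    constructor
    · rintro ⟨j, rfl⟩; exact S.orderEmbOfFin_mem h j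
    · intro hx
      have : x ∈ Set.range (S.orderEmbOfFin h) := by
        rw [S.range_orderEmbOfFin h]; exact hx
      obtain ⟨j, hj⟩ := this
      exact ⟨j, hj⟩
  rw [← hS, ← filter_eq_map hm, Finset.sum_map, Finset.sum_map]
  apply Finset.sum_le_sum
  intro j _
  apply hanti
  rw [Fin.le_def]
  exact aux_le' _ (S.orderEmbOfFin h).strictMono j j.isLt

-- any subset sum of z of size m is ≤ the top-m sum of w
lemma zsum_le {M m : ℕ} (z w : Fin M → ℝ) (σ : Equiv.Perm (Fin M)) (hw : w = z ∘ σ)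
    (hanti : Antitone w) (S : Finset (Fin M)) (h : S.card = m) :
    ∑ i ∈ S, z i ≤ ∑ i ∈ Finset.univ.filter (fun i : Fin M => (i : ℕ) < m), w i := by
  have h' : (S.map σ.symm.toEmbedding).card = m := by rwa [Finset.card_map]
  have := dom w hanti _ h'
  rwa [Finset.sum_map, show (∑ i ∈ S, w (σ.symm.toEmbedding i)) = ∑ i ∈ S, z i from
    Finset.sum_congr rfl (fun i _ => by simp [hw])] at this

-- the top-m sum of w is attained by a subset sum of z
lemma ztop_mem {M m : ℕ} (z w : Fin M → ℝ) (σ : Equiv.Perm (Fin M)) (hw : w = z ∘ σ)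
    (hm : m ≤ M) :
    ∃ S : Finset (Fin M), S.card = m ∧
      (∑ i ∈ Finset.univ.filter (fun i : Fin M => (i : ℕ) < m), w i) = ∑ i ∈ S, z i := by
  refine ⟨(Finset.univ.filter (fun i : Fin M => (i : ℕ) < m)).map σ.toEmbedding,
    by rw [Finset.card_map, filter_card hm], ?_⟩
  rw [Finset.sum_map]
  exact Finset.sum_congr rfl (fun i _ => by simp [hw])

-- key algebraic identity
lemma keyE (M : ℕ) (hM : 2 ≤ M) (z w : Fin M → ℝ) (σ : Equiv.Perm (Fin M))
    (hw : w = z ∘ σ) (hanti : Antitone w) :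
    2 * ∑ k ∈ Finset.Icc 2 M,
        (∑ i ∈ Finset.univ.filter (fun i : Fin M => (i : ℕ) < M - k + 1), w i)
      - ((M : ℝ) - 1) * ∑ i : Fin M, z i
    = ∑ q ∈ Finset.univ.filter (fun q : Fin M × Fin M => q.1 < q.2), |z q.1 - z q.2| := by
  set P := Finset.univ.filter (fun q : Fin M × Fin M => q.1 < q.2) with hP
  -- sum of z = sum of w
  have hzw : ∑ i : Fin M, z i = ∑ i : Fin M, w i := by
    rw [hw]; exact (Equiv.sum_comp σ z).symm
  -- P1: reindex k ↦ m = M - k + 1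
  have P1 : ∑ k ∈ Finset.Icc 2 M,
        (∑ i ∈ Finset.univ.filter (fun i : Fin M => (i : ℕ) < M - k + 1), w i)
      = ∑ m ∈ Finset.Icc 1 (M-1),
        (∑ i ∈ Finset.univ.filter (fun i : Fin M => (i : ℕ) < m), w i) := by
    refine Finset.sum_nbij' (fun k => M - k + 1) (fun m => M - m + 1) ?_ ?_ ?_ ?_ ?_
    · intro a ha; simp only [Finset.mem_Icc] at *; omega
    · intro a ha; simp only [Finset.mem_Icc] at *; omega
    · intro a ha; simp only [Finset.mem_Icc] at ha
      show M - (M - a + 1) + 1 = a; omega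
    · intro a ha; simp only [Finset.mem_Icc] at ha
      show M - (M - a + 1) + 1 = a; omega
    · intro a _; rfl
  -- P2: swap sums
  have P2 : ∑ m ∈ Finset.Icc 1 (M-1),
        (∑ i ∈ Finset.univ.filter (fun i : Fin M => (i : ℕ) < m), w i)
      = ∑ i : Fin M, ((M - 1 - (i : ℕ) : ℕ) : ℝ) * w i := by
    rw [Finset.sum_congr rfl (fun m _ => Finset.sum_filter _ _), Finset.sum_comm]
    refine Finset.sum_congr rfl (fun i _ => ?_)
    rw [← Finset.sum_filter]
    have hfe : (Finset.Icc 1 (M-1)).filter (fun m => (i : ℕ) < m)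
        = Finset.Icc ((i : ℕ) + 1) (M-1) := by
      ext x; simp only [Finset.mem_filter, Finset.mem_Icc]; omega
    rw [hfe, Finset.sum_const, Nat.card_Icc, nsmul_eq_mul]
    congr 1
    norm_cast
    omega
  -- P3: pairs sum of (w q.1 - w q.2)
  have P3 : ∑ q ∈ P, (w q.1 - w q.2)
      = ∑ i : Fin M, ((M - 1 - (i : ℕ) : ℕ) : ℝ) * w i
        - ∑ i : Fin M, ((i : ℕ) : ℝ) * w i := by
    rw [hP, Finset.sum_filter, Fintype.sum_prod_type]
    have hsplit : ∀ i j : Fin M, (if i < j then w i - w j else 0)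
        = (if i < j then w i else 0) - (if i < j then w j else 0) := by
      intro i j; split_ifs <;> simp
    simp_rw [hsplit, Finset.sum_sub_distrib]
    congr 1
    · refine Finset.sum_congr rfl (fun i _ => ?_)
      rw [← Finset.sum_filter, Finset.sum_const]
      have : Finset.univ.filter (fun j : Fin M => i < j) = Finset.Ioi i := by
        ext x; simp
      rw [this, Fin.card_Ioi, nsmul_eq_mul]
    · rw [Finset.sum_comm]
      refine Finset.sum_congr rfl (fun j _ => ?_)
      rw [← Finset.sum_filter, Finset.sum_const]
      have : Finset.univ.filter (fun i : Fin M => i < j) = Finset.Iio j := by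
        ext x; simp
      rw [this, Fin.card_Iio, nsmul_eq_mul]
  -- P4: perm invariance and dropping abs
  have P4 : ∑ q ∈ P, |z q.1 - z q.2| = ∑ q ∈ P, (w q.1 - w q.2) := by
    have h1 : ∑ q ∈ P, (w q.1 - w q.2) = ∑ q ∈ P, |w q.1 - w q.2| := by
      refine Finset.sum_congr rfl (fun q hq => ?_)
      rw [hP, Finset.mem_filter] at hq
      rw [abs_of_nonneg (sub_nonneg.2 (hanti hq.2.le))]
    have h2 : ∑ q ∈ P, |w q.1 - w q.2| = ∑ q ∈ P, |z q.1 - z q.2| := by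
      refine Finset.sum_nbij'
        (fun q => if σ q.1 < σ q.2 then (σ q.1, σ q.2) else (σ q.2, σ q.1))
        (fun q => if σ.symm q.1 < σ.symm q.2 then (σ.symm q.1, σ.symm q.2)
          else (σ.symm q.2, σ.symm q.1)) ?_ ?_ ?_ ?_ ?_
      · intro a ha
        rw [hP, Finset.mem_filter] at *
        split_ifs with h
        · exact ⟨Finset.mem_univ _, h⟩
        · refine ⟨Finset.mem_univ _, lt_of_le_of_ne (not_lt.1 h) ?_⟩
          exact fun hc => (ne_of_lt ha.2) (σ.injective hc).symm
      · intro a ha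
        rw [hP, Finset.mem_filter] at *
        split_ifs with h
        · exact ⟨Finset.mem_univ _, h⟩
        · refine ⟨Finset.mem_univ _, lt_of_le_of_ne (not_lt.1 h) ?_⟩
          exact fun hc => (ne_of_lt ha.2) (σ.symm.injective hc).symm
      · intro a ha
        rw [hP, Finset.mem_filter] at ha
        by_cases h : σ a.1 < σ a.2
        · rw [if_pos h]
          dsimp only
          rw [Equiv.symm_apply_apply, Equiv.symm_apply_apply, if_pos ha.2]
        · rw [if_neg h]
          dsimp only
          rw [Equiv.symm_apply_apply, Equiv.symm_apply_apply,
            if_neg (not_lt.2 ha.2.le)]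
      · intro a ha
        rw [hP, Finset.mem_filter] at ha
        by_cases h : σ.symm a.1 < σ.symm a.2
        · rw [if_pos h]
          dsimp only
          rw [Equiv.apply_symm_apply, Equiv.apply_symm_apply, if_pos ha.2]
        · rw [if_neg h]
          dsimp only
          rw [Equiv.apply_symm_apply, Equiv.apply_symm_apply,
            if_neg (not_lt.2 ha.2.le)]
      · intro a _
        by_cases h : σ a.1 < σ a.2
        · rw [if_pos h]; simp [hw]
        · rw [if_neg h]
          simp only [hw, Function.comp_apply]
          exact abs_sub_comm _ _
    rw [h2] at h1; exact h1.symm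
  rw [P1, P2, P4, P3, hzw, Finset.mul_sum, Finset.mul_sum, ← Finset.sum_sub_distrib,
    ← Finset.sum_sub_distrib]
  refine Finset.sum_congr rfl (fun i _ => ?_)
  have hi : (i : ℕ) < M := i.isLt
  have hc : ((M - 1 - (i : ℕ) : ℕ) : ℝ) = (M : ℝ) - 1 - (i : ℕ) := by
    have h1 : (i : ℕ) ≤ M - 1 := by omega
    have h2 : 1 ≤ M := by omega
    push_cast [Nat.cast_sub h1, Nat.cast_sub h2]
    ring
  rw [hc]; ring

/-- (F5.2) correctness: for each `k = 2,…,M`, the sum of the `M-k+1` largest entries of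
`z` (read off a non-increasing rearrangement `w`) is the maximum subset sum over subsets
of cardinality `M-k+1`; and the minimum of `2∑_{k=2}^M θ_k - (M-1)∑_i z_i` over all `θ`
satisfying the subset constraints equals `∑_{i<j} |z_i - z_j|`. -/
theorem stmt_14 (M : ℕ) (hM : 2 ≤ M) (z w : Fin M → ℝ) (σ : Equiv.Perm (Fin M))
    (hw : w = z ∘ σ) (hanti : Antitone w) :
    (∀ k ∈ Finset.Icc 2 M,
      IsGreatest {v : ℝ | ∃ S : Finset (Fin M), S.card = M - k + 1 ∧ v = ∑ i ∈ S, z i}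
        (∑ i ∈ Finset.univ.filter (fun i : Fin M => (i : ℕ) < M - k + 1), w i)) ∧
    IsLeast
      {v : ℝ | ∃ θ : ℕ → ℝ,
        (∀ k ∈ Finset.Icc 2 M, ∀ S : Finset (Fin M), S.card = M - k + 1 →
          ∑ i ∈ S, z i ≤ θ k) ∧
        v = 2 * ∑ k ∈ Finset.Icc 2 M, θ k - ((M : ℝ) - 1) * ∑ i : Fin M, z i}
      (∑ q ∈ Finset.univ.filter (fun q : Fin M × Fin M => q.1 < q.2), |z q.1 - z q.2|) := by
  constructor
  · intro k hk
    rw [Finset.mem_Icc] at hk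
    have hm : M - k + 1 ≤ M := by omega
    constructor
    · obtain ⟨S, hcard, hsum⟩ := ztop_mem z w σ hw hm
      exact ⟨S, hcard, hsum⟩
    · rintro v ⟨S, hcard, rfl⟩
      exact zsum_le z w σ hw hanti S hcard
  · constructor
    · refine ⟨fun k => ∑ i ∈ Finset.univ.filter
        (fun i : Fin M => (i : ℕ) < M - k + 1), w i, ?_, ?_⟩
      · intro k _ S hS
        exact zsum_le z w σ hw hanti S hS
      · exact (keyE M hM z w σ hw hanti).symm
    · rintro v ⟨θ, hcon, rfl⟩
      have hθ : ∀ k ∈ Finset.Icc 2 M,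
          (∑ i ∈ Finset.univ.filter (fun i : Fin M => (i : ℕ) < M - k + 1), w i) ≤ θ k := by
        intro k hk
        have hk' := Finset.mem_Icc.1 hk
        obtain ⟨S, hc, hs⟩ := ztop_mem z w σ hw (show M - k + 1 ≤ M by omega)
        rw [hs]
        exact hcon k hk S hc
      have hsum := Finset.sum_le_sum hθ
      rw [← keyE M hM z w σ hw hanti]
      linarith
end

section
/- Let O_{i·} : A → {1,…,M} be a bijection for each i ∈ A = {1,…,M} and 1 ≤ p ≤ M. The minimum over all subsets Y ⊆ A with |Y| = p of ∑_{1≤i<j≤M} | min_{ℓ∈Y} O_{iℓ} − min_{ℓ∈Y} O_{jℓ} | equals the optimal value of the mixed-integer program (F1): minimize ∑_{i<j} e_{ij} subject to e_{ij} ≥ z_i − z_j, e_{ij} ≥ z_j − z_i, the closest-assignment constraints z_i + ∑_{ℓ: O_{iℓ} ≤ k−1}(k − O_{iℓ}) y_ℓ ≥ k for all i and k = 1,…,M−p+1, z_i + (M−p+1−O_{ik}) y_k ≤ M−p+1 for all i,k with O_{ik} ≤ M−p, ∑_j y_j = p, and y ∈ {0,1}^M. -/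
/-- Combinatorial envy value of a facility set `Y`. -/
noncomputable def combVal {M : ℕ} (O : Fin M → Fin M → ℕ) (Y : Finset (Fin M)) : ℝ :=
  ∑ q ∈ Finset.univ.filter (fun q : Fin M × Fin M => q.1 < q.2),
    |((sInf {r : ℕ | ∃ ℓ ∈ Y, O q.1 ℓ = r} : ℕ) : ℝ) -
      ((sInf {r : ℕ | ∃ ℓ ∈ Y, O q.2 ℓ = r} : ℕ) : ℝ)|

lemma aux_mval_spec {M : ℕ} (O : Fin M → Fin M → ℕ) (Y : Finset (Fin M)) (hY : Y.Nonempty)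
    (i : Fin M) : ∃ ℓ ∈ Y, O i ℓ = sInf {r : ℕ | ∃ ℓ ∈ Y, O i ℓ = r} := by
  have hne : {r : ℕ | ∃ ℓ ∈ Y, O i ℓ = r}.Nonempty := by
    obtain ⟨ℓ, hℓ⟩ := hY; exact ⟨O i ℓ, ℓ, hℓ, rfl⟩
  obtain ⟨ℓ, hℓ, h⟩ := Nat.sInf_mem hne
  exact ⟨ℓ, hℓ, h⟩

lemma aux_mval_le {M : ℕ} (O : Fin M → Fin M → ℕ) (Y : Finset (Fin M)) {ℓ : Fin M}
    (hℓ : ℓ ∈ Y) (i : Fin M) : sInf {r : ℕ | ∃ ℓ ∈ Y, O i ℓ = r} ≤ O i ℓ :=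
  Nat.sInf_le ⟨ℓ, hℓ, rfl⟩

lemma aux_mval_bounds {M p : ℕ} (hp1 : 1 ≤ p) (hpM : p ≤ M)
    (O : Fin M → Fin M → ℕ) (hO : ∀ i, Set.BijOn (O i) Set.univ (Set.Icc 1 M))
    (Y : Finset (Fin M)) (hY : Y.card = p) (i : Fin M) :
    1 ≤ sInf {r : ℕ | ∃ ℓ ∈ Y, O i ℓ = r} ∧
      sInf {r : ℕ | ∃ ℓ ∈ Y, O i ℓ = r} ≤ M - p + 1 := by
  have hYne : Y.Nonempty := Finset.card_pos.mp (by omega)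
  obtain ⟨ℓ₀, hℓ₀, hm⟩ := aux_mval_spec O Y hYne i
  set m := sInf {r : ℕ | ∃ ℓ ∈ Y, O i ℓ = r} with hmdef
  have hrange : ∀ ℓ : Fin M, O i ℓ ∈ Set.Icc 1 M := fun ℓ => (hO i).mapsTo (Set.mem_univ ℓ)
  have h1 : 1 ≤ m := by rw [← hm]; exact (hrange ℓ₀).1
  have hsub : Y.image (O i) ⊆ Finset.Icc m M := by
    intro r hr
    simp only [Finset.mem_image] at hr
    obtain ⟨ℓ, hℓ, rfl⟩ := hr
    exact Finset.mem_Icc.mpr ⟨aux_mval_le O Y hℓ i, (hrange ℓ).2⟩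
  have hcard : (Y.image (O i)).card = p := by
    rw [Finset.card_image_of_injOn, hY]
    exact fun a _ b _ h => (hO i).injOn (Set.mem_univ a) (Set.mem_univ b) h
  have hle := Finset.card_le_card hsub
  rw [hcard, Nat.card_Icc] at hle
  omega

/-- Direction B: every `p`-subset gives a feasible point of (F1) of equal value. -/
lemma aux_feas {M p : ℕ} (hp1 : 1 ≤ p) (hpM : p ≤ M)
    (O : Fin M → Fin M → ℕ) (hO : ∀ i, Set.BijOn (O i) Set.univ (Set.Icc 1 M))
    (Y : Finset (Fin M)) (hY : Y.card = p) :
    ∃ (e : Fin M → Fin M → ℝ) (z : Fin M → ℝ) (y : Fin M → ℕ),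
      (∀ i j : Fin M, i < j → z i - z j ≤ e i j ∧ z j - z i ≤ e i j) ∧
      (∀ i : Fin M, ∀ k ∈ Finset.Icc 1 (M - p + 1),
        (k : ℝ) ≤ z i + ∑ ℓ ∈ Finset.univ.filter (fun ℓ : Fin M => O i ℓ ≤ k - 1),
          ((k : ℝ) - O i ℓ) * y ℓ) ∧
      (∀ i k : Fin M, O i k ≤ M - p →
        z i + ((M : ℝ) - p + 1 - O i k) * y k ≤ (M : ℝ) - p + 1) ∧
      (∀ j, y j = 0 ∨ y j = 1) ∧ (∑ j : Fin M, y j = p) ∧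
      combVal O Y = ∑ q ∈ Finset.univ.filter (fun q : Fin M × Fin M => q.1 < q.2),
        e q.1 q.2 := by
  have hYne : Y.Nonempty := Finset.card_pos.mp (by omega)
  set mv : Fin M → ℕ := fun i => sInf {r : ℕ | ∃ ℓ ∈ Y, O i ℓ = r} with hmv
  refine ⟨fun i j => |((mv i : ℝ)) - (mv j : ℝ)|, fun i => (mv i : ℝ),
    fun ℓ => if ℓ ∈ Y then 1 else 0, ?_, ?_, ?_, ?_, ?_, rfl⟩
  · intro i j _
    beta_reduce
    constructor
    · exact le_abs_self _
    · rw [abs_sub_comm]; exact le_abs_self _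
  · intro i k hk
    beta_reduce
    rw [Finset.mem_Icc] at hk
    have hsum_nonneg : ∀ ℓ ∈ Finset.univ.filter (fun ℓ : Fin M => O i ℓ ≤ k - 1),
        (0:ℝ) ≤ ((k : ℝ) - O i ℓ) * (if ℓ ∈ Y then (1:ℕ) else 0) := by
      intro ℓ hℓ
      rw [Finset.mem_filter] at hℓ
      have : O i ℓ ≤ k := le_trans hℓ.2 (Nat.sub_le k 1)
      have h1 : (O i ℓ : ℝ) ≤ k := Nat.cast_le.mpr this
      have h2 : (0:ℝ) ≤ (if ℓ ∈ Y then (1:ℕ) else 0 : ℕ) := Nat.cast_nonneg _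
      exact mul_nonneg (by linarith) h2
    by_cases h : k ≤ mv i
    · have : (k : ℝ) ≤ (mv i : ℝ) := Nat.cast_le.mpr h
      have := Finset.sum_nonneg hsum_nonneg
      linarith
    · push_neg at h
      obtain ⟨ℓ₀, hℓ₀, hm⟩ := aux_mval_spec O Y hYne i
      have hOℓ₀ : O i ℓ₀ = mv i := hm
      have hmem : ℓ₀ ∈ Finset.univ.filter (fun ℓ : Fin M => O i ℓ ≤ k - 1) := by
        rw [Finset.mem_filter]
        exact ⟨Finset.mem_univ _, by omega⟩
      have hsingle := Finset.single_le_sum hsum_nonneg hmem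
      have hy : (if ℓ₀ ∈ Y then (1:ℕ) else 0) = 1 := if_pos hℓ₀
      rw [hy, hOℓ₀, Nat.cast_one, mul_one] at hsingle
      have : (mv i : ℝ) < k := Nat.cast_lt.mpr h
      linarith
  · intro i k hk
    beta_reduce
    have hbd := aux_mval_bounds hp1 hpM O hO Y hY i
    by_cases h : k ∈ Y
    · have hy : (if k ∈ Y then (1:ℕ) else 0) = 1 := if_pos h
      have hle : mv i ≤ O i k := aux_mval_le O Y h i
      have : (mv i : ℝ) ≤ O i k := Nat.cast_le.mpr hle
      rw [hy]
      push_cast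
      linarith
    · have hy : (if k ∈ Y then (1:ℕ) else 0) = 0 := if_neg h
      rw [hy]
      have : (mv i : ℝ) ≤ ((M - p + 1 : ℕ) : ℝ) := Nat.cast_le.mpr hbd.2
      rw [Nat.cast_add, Nat.cast_sub hpM, Nat.cast_one] at this
      push_cast
      linarith
  · intro j; by_cases h : j ∈ Y <;> simp [h]
  · have : ∀ j : Fin M, (if j ∈ Y then (1:ℕ) else 0) = if j ∈ Y then 1 else 0 := fun _ => rfl
    rw [Finset.sum_ite_mem, Finset.univ_inter]
    simp [hY]

/-- Direction A: every feasible point of (F1) dominates the envy of some `p`-subset. -/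
lemma aux_lb {M p : ℕ} (hp1 : 1 ≤ p) (hpM : p ≤ M)
    (O : Fin M → Fin M → ℕ) (hO : ∀ i, Set.BijOn (O i) Set.univ (Set.Icc 1 M))
    (e : Fin M → Fin M → ℝ) (z : Fin M → ℝ) (y : Fin M → ℕ)
    (h1 : ∀ i j : Fin M, i < j → z i - z j ≤ e i j ∧ z j - z i ≤ e i j)
    (h2 : ∀ i : Fin M, ∀ k ∈ Finset.Icc 1 (M - p + 1),
      (k : ℝ) ≤ z i + ∑ ℓ ∈ Finset.univ.filter (fun ℓ : Fin M => O i ℓ ≤ k - 1),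
        ((k : ℝ) - O i ℓ) * y ℓ)
    (h3 : ∀ i k : Fin M, O i k ≤ M - p →
      z i + ((M : ℝ) - p + 1 - O i k) * y k ≤ (M : ℝ) - p + 1)
    (hbin : ∀ j, y j = 0 ∨ y j = 1) (hsum : ∑ j : Fin M, y j = p) :
    ∃ Y : Finset (Fin M), Y.card = p ∧
      combVal O Y ≤ ∑ q ∈ Finset.univ.filter (fun q : Fin M × Fin M => q.1 < q.2),
        e q.1 q.2 := by
  set Y : Finset (Fin M) := Finset.univ.filter (fun ℓ => y ℓ = 1) with hYdef
  have hymem : ∀ j : Fin M, j ∈ Y ↔ y j = 1 := by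
    intro j; simp [hYdef]
  have hYcard : Y.card = p := by
    have : ∀ j : Fin M, y j = if j ∈ Y then 1 else 0 := by
      intro j
      rcases hbin j with h | h <;> simp [hymem, h]
    calc Y.card = ∑ j ∈ Y, 1 := by rw [Finset.card_eq_sum_ones]
      _ = ∑ j : Fin M, if j ∈ Y then 1 else 0 := by
          rw [Finset.sum_ite_mem, Finset.univ_inter]
      _ = ∑ j : Fin M, y j := by exact Finset.sum_congr rfl fun j _ => (this j).symm
      _ = p := hsum
  refine ⟨Y, hYcard, ?_⟩
  have hYne : Y.Nonempty := Finset.card_pos.mp (by omega)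
  set mv : Fin M → ℕ := fun i => sInf {r : ℕ | ∃ ℓ ∈ Y, O i ℓ = r} with hmv
  have key : ∀ i : Fin M, ∀ j : Fin M, |(mv i : ℝ) - (mv j : ℝ)| ≤
      max (z i - z j) (z j - z i) := by
    -- first show mv i bounds / z relations
    have hbd : ∀ i, 1 ≤ mv i ∧ mv i ≤ M - p + 1 := fun i =>
      aux_mval_bounds hp1 hpM O hO Y hYcard i
    by_cases hpltM : p < M
    · -- z i = mv i for all i
      have hz : ∀ i : Fin M, z i = (mv i : ℝ) := by
        intro i
        have hlow : (mv i : ℝ) ≤ z i := by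
          have hk := h2 i (mv i) (Finset.mem_Icc.mpr ⟨(hbd i).1, (hbd i).2⟩)
          have hzero : ∑ ℓ ∈ Finset.univ.filter (fun ℓ : Fin M => O i ℓ ≤ mv i - 1),
              ((mv i : ℝ) - O i ℓ) * y ℓ = 0 := by
            apply Finset.sum_eq_zero
            intro ℓ hℓ
            rw [Finset.mem_filter] at hℓ
            rcases hbin ℓ with h | h
            · rw [h]; simp
            · exfalso
              have hℓY : ℓ ∈ Y := (hymem ℓ).mpr h
              have hge : mv i ≤ O i ℓ := aux_mval_le O Y hℓY i
              have h1 := (hbd i).1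
              omega
          rw [hzero, add_zero] at hk
          exact hk
        have hup : z i ≤ (mv i : ℝ) := by
          by_cases hcase : mv i ≤ M - p
          · obtain ⟨ℓ₀, hℓ₀, hm⟩ := aux_mval_spec O Y hYne i
            have hy : y ℓ₀ = 1 := (hymem ℓ₀).mp hℓ₀
            have hc := h3 i ℓ₀ (by rw [hm]; exact hcase)
            rw [hy, hm] at hc
            push_cast at hc
            linarith
          · have hmi : mv i = M - p + 1 := by have := (hbd i).2; omega
            -- find k with O i k = M - p
            have hMp1 : 1 ≤ M - p := by omega
            have hmem : (M - p : ℕ) ∈ Set.Icc 1 M := ⟨hMp1, by omega⟩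
            obtain ⟨k, -, hk⟩ := (hO i).surjOn hmem
            have hc := h3 i k (le_of_eq hk)
            have hcoef : (0:ℝ) ≤ ((M : ℝ) - p + 1 - O i k) * y k := by
              apply mul_nonneg _ (Nat.cast_nonneg _)
              have : (O i k : ℝ) = ((M - p : ℕ) : ℝ) := by rw [hk]
              rw [this, Nat.cast_sub hpM]
              linarith
            have hcast : ((mv i : ℕ) : ℝ) = (M : ℝ) - p + 1 := by
              rw [hmi, Nat.cast_add, Nat.cast_sub hpM, Nat.cast_one]
            rw [hcast]
            linarith
        linarith
      intro i j
      rw [← hz i, ← hz j]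
      exact abs_sub_le_iff.mpr ⟨le_max_left (z i - z j) (z j - z i),
        le_max_right (z i - z j) (z j - z i)⟩
    · -- p = M : Y = univ and mv i = 1 for all i
      have hpM' : p = M := by omega
      have hmv1 : ∀ i, mv i = 1 := by
        intro i
        have : (1 : ℕ) ∈ Set.Icc 1 M := ⟨le_refl _, by omega⟩
        obtain ⟨ℓ, -, hℓ⟩ := (hO i).surjOn this
        have hYuniv : Y = Finset.univ := Finset.eq_univ_of_card Y (by rw [hYcard, hpM', Fintype.card_fin])
        have hle : mv i ≤ 1 := by
          have hmem' : ℓ ∈ Y := by rw [hYuniv]; exact Finset.mem_univ _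
          have h2 : mv i ≤ O i ℓ := aux_mval_le O Y hmem' i
          omega
        have := (hbd i).1
        omega
      intro i j
      rw [hmv1 i, hmv1 j]
      simp only [sub_self, abs_zero]
      rcases le_total (z i) (z j) with h | h
      · exact le_max_of_le_right (by linarith)
      · exact le_max_of_le_left (by linarith)
  unfold combVal
  apply Finset.sum_le_sum
  intro q hq
  rw [Finset.mem_filter] at hq
  have hlt := hq.2
  have h := h1 q.1 q.2 hlt
  calc |((mv q.1 : ℕ) : ℝ) - ((mv q.2 : ℕ) : ℝ)| ≤ max (z q.1 - z q.2) (z q.2 - z q.1) :=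
        key q.1 q.2
    _ ≤ e q.1 q.2 := max_le h.1 h.2

/-- Correctness of formulation (F1) for the minimum-envy `p`-location problem: the
combinatorial minimum total envy over all `p`-subsets `Y` of sites equals the optimal
value of the mixed-integer program (F1). -/
theorem stmt_15 (M p : ℕ) (hp1 : 1 ≤ p) (hpM : p ≤ M)
    (O : Fin M → Fin M → ℕ)
    (hO : ∀ i, Set.BijOn (O i) Set.univ (Set.Icc 1 M)) :
    sInf {v : ℝ | ∃ Y : Finset (Fin M), Y.card = p ∧
        v = ∑ q ∈ Finset.univ.filter (fun q : Fin M × Fin M => q.1 < q.2),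
          |((sInf {r : ℕ | ∃ ℓ ∈ Y, O q.1 ℓ = r} : ℕ) : ℝ) -
            ((sInf {r : ℕ | ∃ ℓ ∈ Y, O q.2 ℓ = r} : ℕ) : ℝ)|} =
    sInf {v : ℝ | ∃ (e : Fin M → Fin M → ℝ) (z : Fin M → ℝ) (y : Fin M → ℕ),
        (∀ i j : Fin M, i < j → z i - z j ≤ e i j ∧ z j - z i ≤ e i j) ∧
        (∀ i : Fin M, ∀ k ∈ Finset.Icc 1 (M - p + 1),
          (k : ℝ) ≤ z i + ∑ ℓ ∈ Finset.univ.filter (fun ℓ : Fin M => O i ℓ ≤ k - 1),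
            ((k : ℝ) - O i ℓ) * y ℓ) ∧
        (∀ i k : Fin M, O i k ≤ M - p →
          z i + ((M : ℝ) - p + 1 - O i k) * y k ≤ (M : ℝ) - p + 1) ∧
        (∀ j, y j = 0 ∨ y j = 1) ∧ (∑ j : Fin M, y j = p) ∧
        v = ∑ q ∈ Finset.univ.filter (fun q : Fin M × Fin M => q.1 < q.2), e q.1 q.2} := by
  obtain ⟨Y₀, -, hY₀⟩ := Finset.exists_subset_card_eq (s := (Finset.univ : Finset (Fin M))) (n := p)
    (by simpa using hpM)
  have hbdd1 : BddBelow {v : ℝ | ∃ Y : Finset (Fin M), Y.card = p ∧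
      v = ∑ q ∈ Finset.univ.filter (fun q : Fin M × Fin M => q.1 < q.2),
        |((sInf {r : ℕ | ∃ ℓ ∈ Y, O q.1 ℓ = r} : ℕ) : ℝ) -
          ((sInf {r : ℕ | ∃ ℓ ∈ Y, O q.2 ℓ = r} : ℕ) : ℝ)|} := by
    refine ⟨0, ?_⟩
    rintro w ⟨Y', -, rfl⟩
    positivity
  have hbdd2 : BddBelow {v : ℝ | ∃ (e : Fin M → Fin M → ℝ) (z : Fin M → ℝ) (y : Fin M → ℕ),
      (∀ i j : Fin M, i < j → z i - z j ≤ e i j ∧ z j - z i ≤ e i j) ∧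
      (∀ i : Fin M, ∀ k ∈ Finset.Icc 1 (M - p + 1),
        (k : ℝ) ≤ z i + ∑ ℓ ∈ Finset.univ.filter (fun ℓ : Fin M => O i ℓ ≤ k - 1),
          ((k : ℝ) - O i ℓ) * y ℓ) ∧
      (∀ i k : Fin M, O i k ≤ M - p →
        z i + ((M : ℝ) - p + 1 - O i k) * y k ≤ (M : ℝ) - p + 1) ∧
      (∀ j, y j = 0 ∨ y j = 1) ∧ (∑ j : Fin M, y j = p) ∧
      v = ∑ q ∈ Finset.univ.filter (fun q : Fin M × Fin M => q.1 < q.2), e q.1 q.2} := by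
    refine ⟨0, ?_⟩
    rintro w ⟨e, z, y, h1, h2, h3, hbin, hsum, rfl⟩
    obtain ⟨Y, hYc, hle⟩ := aux_lb hp1 hpM O hO e z y h1 h2 h3 hbin hsum
    have h0 : (0:ℝ) ≤ combVal O Y := by unfold combVal; positivity
    linarith
  apply le_antisymm
  · apply le_csInf
    · obtain ⟨e, z, y, h1, h2, h3, hbin, hsum, hval⟩ := aux_feas hp1 hpM O hO Y₀ hY₀
      exact ⟨_, e, z, y, h1, h2, h3, hbin, hsum, rfl⟩
    · rintro v ⟨e, z, y, h1, h2, h3, hbin, hsum, rfl⟩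
      obtain ⟨Y, hYc, hle⟩ := aux_lb hp1 hpM O hO e z y h1 h2 h3 hbin hsum
      exact csInf_le_of_le hbdd1 ⟨Y, hYc, rfl⟩ hle
  · apply le_csInf
    · exact ⟨_, Y₀, hY₀, rfl⟩
    · rintro v ⟨Y, hYc, rfl⟩
      obtain ⟨e, z, y, h1, h2, h3, hbin, hsum, hval⟩ := aux_feas hp1 hpM O hO Y hYc
      exact csInf_le_of_le hbdd2 ⟨e, z, y, h1, h2, h3, hbin, hsum, rfl⟩ hval.ge
end

section
/- For any z ∈ ℝ^M, ∑_{1≤i<j≤M} |z_i − z_j| = 2 ∑_{i=1}^M ∑_{q=1}^{M−1} max(z_i − t_q, 0) + 2 ∑_{q=1}^{M−1} q·t_q − (M−1) ∑_{i=1}^M z_i, where t_q is the (q+1)-st largest entry of z (equivalently, the (M−q)-th smallest entry). -/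
open Finset

lemma lemC (v : ℕ → ℝ) : ∀ n : ℕ,
    2 * ∑ q ∈ Icc 1 n, (∑ i ∈ range (q+1), v i - ((q:ℝ)+1) * v q)
      + 2 * ∑ q ∈ Icc 1 n, (q:ℝ) * v q
      - (n:ℝ) * ∑ i ∈ range (n+1), v i
    = ∑ i ∈ range (n+1), ((n:ℝ) - 2*(i:ℝ)) * v i := by
  intro n
  induction n with
  | zero => simp
  | succ n ih =>
    have h1 : Icc 1 (n+1) = insert (n+1) (Icc 1 n) := by
      ext x; simp [Finset.mem_Icc, Finset.mem_insert]; omega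
    have h2 : (n+1) ∉ Icc 1 n := by simp
    have h3 : ∑ i ∈ range (n+2), ((↑(n+1):ℝ) - 2*(i:ℝ)) * v i
        = ∑ i ∈ range (n+2), (((n:ℝ) - 2*(i:ℝ)) * v i + v i) := by
      apply Finset.sum_congr rfl; intro i _; push_cast; ring
    rw [h1, Finset.sum_insert h2, Finset.sum_insert h2, h3, Finset.sum_add_distrib]
    simp only [Finset.sum_range_succ] at ih ⊢
    push_cast at ih ⊢
    linear_combination ih
open Finset

lemma lemMax (v : ℕ → ℝ) (hv : Antitone v) (M q : ℕ) (hq : q < M) :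
    ∑ i ∈ range M, max (v i - v q) 0 = ∑ i ∈ range (q+1), v i - ((q:ℝ)+1) * v q := by
  have hsplit : ∑ i ∈ Finset.Ico 0 (q+1), max (v i - v q) 0
      + ∑ i ∈ Finset.Ico (q+1) M, max (v i - v q) 0
      = ∑ i ∈ Finset.Ico 0 M, max (v i - v q) 0 :=
    Finset.sum_Ico_consecutive _ (by omega) (by omega)
  rw [Finset.range_eq_Ico, ← hsplit]
  have e1 : ∑ i ∈ Finset.Ico 0 (q+1), max (v i - v q) 0
      = ∑ i ∈ Finset.Ico 0 (q+1), (v i - v q) := by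
    apply Finset.sum_congr rfl; intro i hi
    simp only [Finset.mem_Ico] at hi
    exact max_eq_left (sub_nonneg.2 (hv (by omega)))
  have e2 : ∑ i ∈ Finset.Ico (q+1) M, max (v i - v q) 0 = 0 := by
    apply Finset.sum_eq_zero; intro i hi
    simp only [Finset.mem_Ico] at hi
    exact max_eq_right (sub_nonpos.2 (hv (by omega)))
  rw [e1, e2, add_zero, Finset.sum_sub_distrib, Finset.sum_const, ← Finset.range_eq_Ico]
  simp [Finset.card_range]

lemma lemA (v : ℕ → ℝ) (hv : Antitone v) : ∀ M : ℕ,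
    ∑ i ∈ range M, ∑ j ∈ range M, |v i - v j|
      = 2 * ∑ i ∈ range M, ((M:ℝ) - 1 - 2*(i:ℝ)) * v i := by
  intro M
  induction M with
  | zero => simp
  | succ M ih =>
    have e1 : ∀ i ∈ range M, |v i - v M| = v i - v M := fun i hi => by
      simp only [Finset.mem_range] at hi
      exact abs_of_nonneg (sub_nonneg.2 (hv (by omega)))
    have e2 : ∀ j ∈ range M, |v M - v j| = v j - v M := fun j hj => by
      simp only [Finset.mem_range] at hj
      rw [abs_of_nonpos (sub_nonpos.2 (hv (by omega)))]; ring
    have h3 : ∑ i ∈ range (M+1), ((↑(M+1):ℝ) - 1 - 2*(i:ℝ)) * v i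
        = ∑ i ∈ range (M+1), (((M:ℝ) - 1 - 2*(i:ℝ)) * v i + v i) := by
      apply Finset.sum_congr rfl; intro i _; push_cast; ring
    rw [h3, Finset.sum_add_distrib]
    simp only [Finset.sum_range_succ]
    rw [Finset.sum_add_distrib, Finset.sum_congr rfl e1, Finset.sum_congr rfl e2]
    simp only [Finset.sum_sub_distrib, Finset.sum_const, Finset.card_range,
      nsmul_eq_mul, sub_self, abs_zero, add_zero]
    push_cast at ih ⊢
    linear_combination ih
open Finset

lemma pairSum {M : ℕ} (f : Fin M → ℝ) :
    2 * ∑ p ∈ Finset.univ.filter (fun p : Fin M × Fin M => p.1 < p.2), |f p.1 - f p.2|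
      = ∑ i : Fin M, ∑ j : Fin M, |f i - f j| := by
  rw [← Fintype.sum_prod_type']
  have h : ∀ p : Fin M × Fin M, |f p.1 - f p.2| =
      (if p.1 < p.2 then |f p.1 - f p.2| else 0)
      + (if p.2 < p.1 then |f p.1 - f p.2| else 0) := by
    intro p
    rcases lt_trichotomy p.1 p.2 with h | h | h
    · simp [h, not_lt_of_gt h]
    · simp [h, lt_irrefl]
    · simp [h, not_lt_of_gt h]
  have expand : ∑ p : Fin M × Fin M, |f p.1 - f p.2|
      = (∑ p ∈ Finset.univ.filter (fun p : Fin M × Fin M => p.1 < p.2), |f p.1 - f p.2|)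
      + ∑ p ∈ Finset.univ.filter (fun p : Fin M × Fin M => p.2 < p.1), |f p.1 - f p.2| := by
    rw [Finset.sum_filter, Finset.sum_filter, ← Finset.sum_add_distrib]
    exact Finset.sum_congr rfl (fun p _ => h p)
  have hswap : ∑ p ∈ Finset.univ.filter (fun p : Fin M × Fin M => p.2 < p.1), |f p.1 - f p.2|
      = ∑ p ∈ Finset.univ.filter (fun p : Fin M × Fin M => p.1 < p.2), |f p.1 - f p.2| := by
    apply Finset.sum_nbij' (fun p => Prod.swap p) (fun p => Prod.swap p)
    · intro a ha; simp only [Finset.mem_filter, Finset.mem_univ, true_and] at ha ⊢; exact ha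
    · intro a ha; simp only [Finset.mem_filter, Finset.mem_univ, true_and] at ha ⊢; exact ha
    · intro a _; simp
    · intro a _; simp
    · intro a _; simp [abs_sub_comm]
  rw [expand, hswap]; ring


/-- Explicit optimal auxiliary variables for (F3): with `w` a non-increasing rearrangement
of `z` and `t_q = w_{q+1}` (the `(q+1)`-st largest entry, 0-indexed `w ⟨q, _⟩`),
`∑_{i<j} |z_i - z_j| = 2∑_i ∑_{q=1}^{M-1} max(z_i - t_q, 0) + 2∑_{q=1}^{M-1} q·t_q
 - (M-1)∑_i z_i`. -/
theorem stmt_16 (M : ℕ) (hM : 2 ≤ M) (z w : Fin M → ℝ) (σ : Equiv.Perm (Fin M))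
    (hw : w = z ∘ σ) (hanti : Antitone w) (t : ℕ → ℝ)
    (ht : ∀ q, ∀ _ : 1 ≤ q, ∀ h2 : q ≤ M - 1, t q = w ⟨q, by omega⟩) :
    ∑ q ∈ Finset.univ.filter (fun q : Fin M × Fin M => q.1 < q.2), |z q.1 - z q.2| =
      2 * ∑ i : Fin M, ∑ q ∈ Finset.Icc 1 (M - 1), max (z i - t q) 0 +
      2 * ∑ q ∈ Finset.Icc 1 (M - 1), (q : ℝ) * t q -
      ((M : ℝ) - 1) * ∑ i : Fin M, z i := by
  have hM1 : M - 1 < M := by omega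
  set v : ℕ → ℝ := fun q => w ⟨min q (M-1), lt_of_le_of_lt (min_le_right _ _) hM1⟩ with hvdef
  have hvw : ∀ i : Fin M, v i.val = w i := by
    intro i
    show w _ = w i
    congr 1
    ext
    simp only []
    omega
  have hvanti : Antitone v := by
    intro a b hab
    exact hanti (by simp only [Fin.mk_le_mk]; exact min_le_min hab le_rfl)
  have hzσ : ∀ i, z (σ i) = w i := fun i => (congrFun hw i).symm
  -- t q = v q on Icc
  have htv : ∀ q ∈ Finset.Icc 1 (M-1), t q = v q := by
    intro q hq
    rw [Finset.mem_Icc] at hq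
    rw [ht q hq.1 hq.2]
    show w _ = w _
    congr 1
    ext
    simp only []
    omega
  -- LHS chain
  have hz : ∑ i : Fin M, ∑ j : Fin M, |z i - z j|
      = ∑ i ∈ range M, ∑ j ∈ range M, |v i - v j| := by
    rw [← Equiv.sum_comp σ (fun i => ∑ j : Fin M, |z i - z j|)]
    rw [← Fin.sum_univ_eq_sum_range (fun i => ∑ j ∈ range M, |v i - v j|) M]
    apply Finset.sum_congr rfl; intro i _
    rw [← Equiv.sum_comp σ (fun j => |z (σ i) - z j|)]
    rw [← Fin.sum_univ_eq_sum_range (fun j => |v i - v j|) M]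
    apply Finset.sum_congr rfl; intro j _
    rw [hzσ, hzσ, hvw, hvw]
  -- RHS pieces
  have R1a : ∑ i : Fin M, ∑ q ∈ Finset.Icc 1 (M-1), max (z i - t q) 0
      = ∑ i ∈ range M, ∑ q ∈ Finset.Icc 1 (M-1), max (v i - v q) 0 := by
    rw [← Equiv.sum_comp σ (fun i => ∑ q ∈ Finset.Icc 1 (M-1), max (z i - t q) 0)]
    rw [← Fin.sum_univ_eq_sum_range (fun i => ∑ q ∈ Finset.Icc 1 (M-1), max (v i - v q) 0) M]
    apply Finset.sum_congr rfl; intro i _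
    apply Finset.sum_congr rfl; intro q hq
    rw [hzσ, hvw, htv q hq]
  have R1 : ∑ i : Fin M, ∑ q ∈ Finset.Icc 1 (M-1), max (z i - t q) 0
      = ∑ q ∈ Finset.Icc 1 (M-1), ∑ i ∈ range M, max (v i - v q) 0 :=
    R1a.trans Finset.sum_comm
  have R2 : ∑ q ∈ Finset.Icc 1 (M-1), (q:ℝ) * t q
      = ∑ q ∈ Finset.Icc 1 (M-1), (q:ℝ) * v q := by
    apply Finset.sum_congr rfl; intro q hq; rw [htv q hq]
  have R3 : ∑ i : Fin M, z i = ∑ i ∈ range M, v i := by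
    rw [← Equiv.sum_comp σ z, ← Fin.sum_univ_eq_sum_range v M]
    exact Finset.sum_congr rfl (fun i _ => by rw [hzσ, hvw])
  have R1' : ∑ q ∈ Finset.Icc 1 (M-1), ∑ i ∈ range M, max (v i - v q) 0
      = ∑ q ∈ Finset.Icc 1 (M-1), (∑ i ∈ range (q+1), v i - ((q:ℝ)+1) * v q) := by
    apply Finset.sum_congr rfl; intro q hq
    rw [Finset.mem_Icc] at hq
    exact lemMax v hvanti M q (by omega)
  -- finish
  obtain ⟨n, rfl⟩ : ∃ n, M = n + 1 := ⟨M - 1, by omega⟩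
  simp only [Nat.add_sub_cancel] at *
  have hA := lemA v hvanti (n+1)
  have hC := lemC v n
  have hcoef : ∑ i ∈ range (n+1), ((↑(n+1):ℝ) - 1 - 2*(i:ℝ)) * v i
      = ∑ i ∈ range (n+1), ((n:ℝ) - 2*(i:ℝ)) * v i := by
    apply Finset.sum_congr rfl; intro i _; push_cast; ring
  have hpair := pairSum z
  rw [hz, hA, hcoef] at hpair
  rw [R1, R1', R2, R3]
  push_cast at hpair hC ⊢
  linarith [hpair, hC]
end
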